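/- For any scheduling problem S on n items, χ_S(k) = Σ_{i=1}^n f_i · C(k,i), where f_i is the number of ordered set partitions Φ of [n] with exactly i non-empty blocks such that every vector a with Δ(a) = Φ solves S. In particular the coefficients f_i are non-negative integers. -/

import Mathlib

/-- A scheduling problem on `n` items: a boolean formula over atoms `x i ≤ x j`. -/
inductive SForm (n : ℕ) : Type
  | atom (i j : Fin n) : SForm n
  | not (φ : SForm n) : SForm n
  | and (φ ψ : SForm n) : SForm n
  | or (φ ψ : SForm n) : SForm n

/-- Evaluation of a scheduling formula at an assignment `a : Fin n → ℕ`. -/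
def SForm.eval {n : ℕ} : SForm n → (Fin n → ℕ) → Bool
  | .atom i j, a => decide (a i ≤ a j)
  | .not φ, a => !(φ.eval a)
  | .and φ ψ, a => φ.eval a && ψ.eval a
  | .or φ ψ, a => φ.eval a || ψ.eval a

/-- `schedCount S k` = number of vectors `a ∈ [k]^n` (entries in `{1,…,k}`) solving `S`. -/
def schedCount {n : ℕ} (S : SForm n) (k : ℕ) : ℕ :=
  ((Fintype.piFinset fun _ : Fin n => Finset.Icc 1 k).filter
    fun a => S.eval a = true).card

/-- An ordered set partition of `[n]`. -/
structure OSP (n : ℕ) where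
  blocks : List (Finset (Fin n))
  nonempty : ∀ B ∈ blocks, B.Nonempty
  pairwiseDisjoint : blocks.Pairwise Disjoint
  cover : ∀ i : Fin n, ∃ B ∈ blocks, i ∈ B

/-- Number of blocks of an ordered set partition. -/
def OSP.length {n : ℕ} (Φ : OSP n) : ℕ := Φ.blocks.length

/-- `Φ.delta a` : the order class of `a` is `Φ`, i.e. coordinates of `a` are constant on each
block and ordered according to the block order. -/
def OSP.delta {n : ℕ} (Φ : OSP n) (a : Fin n → ℕ) : Prop :=
  ∃ idx : Fin n → Fin Φ.blocks.length,
    (∀ i, i ∈ Φ.blocks.get (idx i)) ∧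
    (∀ i j, a i ≤ a j ↔ (idx i : ℕ) ≤ (idx j : ℕ))

/-- An ordered set partition `Φ` solves `S` if every vector with order class `Φ` satisfies `S`. -/
def OSP.solves {n : ℕ} (Φ : OSP n) (S : SForm n) : Prop :=
  ∀ a : Fin n → ℕ, Φ.delta a → S.eval a = true

/-- `Ψ.refines Φ` : `Φ` is obtained from `Ψ` by merging consecutive blocks. -/
def OSP.refines {n : ℕ} (Ψ Φ : OSP n) : Prop :=
  ∃ g : Fin Ψ.blocks.length → Fin Φ.blocks.length,
    Monotone g ∧
    ∀ l : Fin Φ.blocks.length,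
      Φ.blocks.get l =
        (Finset.univ.filter fun m => g m = l).biUnion fun m => Ψ.blocks.get m

/-- One step of directed refinement: `F` is obtained from `C` by splitting one block into two
adjacent blocks, every element of the first being less than every element of the second. -/
def dirCov {n : ℕ} (C F : OSP n) : Prop :=
  ∃ (L R : List (Finset (Fin n))) (B₁ B₂ : Finset (Fin n)),
    F.blocks = L ++ B₁ :: B₂ :: R ∧
    C.blocks = L ++ (B₁ ∪ B₂) :: R ∧
    ∀ x ∈ B₁, ∀ y ∈ B₂, x < y

/-- `dirRef C F` : `F` is a directed refinement of `C` (`C ⪯ F`). -/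
def dirRef {n : ℕ} : OSP n → OSP n → Prop := Relation.ReflTransGen dirCov


namespace OSP

variable {n : ℕ}

theorem ext' {Φ Ψ : OSP n} (h : Φ.blocks = Ψ.blocks) : Φ = Ψ := by
  cases Φ; cases Ψ; cases h; rfl

lemma disjoint_get (Φ : OSP n) {l m : Fin Φ.blocks.length} (h : l ≠ m) :
    Disjoint (Φ.blocks.get l) (Φ.blocks.get m) := by
  rcases lt_or_gt_of_ne h with h' | h'
  · exact List.pairwise_iff_get.mp Φ.pairwiseDisjoint l m h'
  · exact (List.pairwise_iff_get.mp Φ.pairwiseDisjoint m l h').symm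

lemma exists_idx (Φ : OSP n) (i : Fin n) : ∃ l : Fin Φ.blocks.length, i ∈ Φ.blocks.get l := by
  obtain ⟨B, hB, hiB⟩ := Φ.cover i
  obtain ⟨l, rfl⟩ := List.mem_iff_get.mp hB
  exact ⟨l, hiB⟩

noncomputable def idx (Φ : OSP n) (i : Fin n) : Fin Φ.blocks.length :=
  (Φ.exists_idx i).choose

lemma mem_get_idx (Φ : OSP n) (i : Fin n) : i ∈ Φ.blocks.get (Φ.idx i) :=
  (Φ.exists_idx i).choose_spec

lemma idx_eq_of_mem (Φ : OSP n) {i : Fin n} {l} (h : i ∈ Φ.blocks.get l) : Φ.idx i = l := by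
  by_contra hne
  exact Finset.disjoint_left.mp (Φ.disjoint_get hne) (Φ.mem_get_idx i) h

noncomputable def rep (Φ : OSP n) (l : Fin Φ.blocks.length) : Fin n :=
  (Φ.nonempty _ (Φ.blocks.get_mem l)).choose

lemma rep_mem (Φ : OSP n) (l : Fin Φ.blocks.length) : Φ.rep l ∈ Φ.blocks.get l :=
  (Φ.nonempty _ (Φ.blocks.get_mem l)).choose_spec

lemma idx_rep (Φ : OSP n) (l : Fin Φ.blocks.length) : Φ.idx (Φ.rep l) = l :=
  Φ.idx_eq_of_mem (Φ.rep_mem l)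

lemma delta_iff (Φ : OSP n) (a : Fin n → ℕ) :
    Φ.delta a ↔ ∀ i j, a i ≤ a j ↔ (Φ.idx i : ℕ) ≤ (Φ.idx j : ℕ) := by
  constructor
  · rintro ⟨f, hf, ho⟩ i j
    have hfi : ∀ i, Φ.idx i = f i := fun i => Φ.idx_eq_of_mem (hf i)
    rw [ho i j, hfi i, hfi j]
  · intro h
    exact ⟨Φ.idx, Φ.mem_get_idx, h⟩

section key

variable {Φ : OSP n} {a : Fin n → ℕ}
  (hd : ∀ i j, a i ≤ a j ↔ (Φ.idx i : ℕ) ≤ (Φ.idx j : ℕ))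

include hd

lemma apply_rep_idx (j : Fin n) : a (Φ.rep (Φ.idx j)) = a j := by
  have h1 := (hd j (Φ.rep (Φ.idx j))).mpr (by rw [Φ.idx_rep])
  have h2 := (hd (Φ.rep (Φ.idx j)) j).mpr (by rw [Φ.idx_rep])
  omega

lemma strictMono_rep : StrictMono (fun l => a (Φ.rep l)) := by
  intro l m hlm
  have := lt_iff_lt_of_le_iff_le (hd (Φ.rep m) (Φ.rep l))
  simp only [Φ.idx_rep] at this
  exact this.mpr (by exact_mod_cast hlm)

lemma image_eq_image_rep :
    Finset.image a Finset.univ = Finset.image (fun l => a (Φ.rep l)) Finset.univ := by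
  ext x
  simp only [Finset.mem_image, Finset.mem_univ, true_and]
  constructor
  · rintro ⟨j, rfl⟩
    exact ⟨Φ.idx j, apply_rep_idx hd j⟩
  · rintro ⟨l, rfl⟩
    exact ⟨Φ.rep l, rfl⟩

lemma card_image_eq_length : (Finset.image a Finset.univ).card = Φ.blocks.length := by
  rw [image_eq_image_rep hd,
    Finset.card_image_of_injective _ (strictMono_rep hd).injective, Finset.card_univ,
    Fintype.card_fin]

lemma eq_orderEmbOfFin (j : Fin n) :
    a j = (Finset.image a Finset.univ).orderEmbOfFin (card_image_eq_length hd) (Φ.idx j) := by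
  have hv : (fun l => a (Φ.rep l)) =
      ⇑((Finset.image a Finset.univ).orderEmbOfFin (card_image_eq_length hd)) := by
    apply Finset.orderEmbOfFin_unique (card_image_eq_length hd)
    · intro l
      exact Finset.mem_image_of_mem a (Finset.mem_univ _)
    · exact strictMono_rep hd
  rw [← hv]
  exact (apply_rep_idx hd j).symm

lemma idx_val (j : Fin n) :
    (Φ.idx j : ℕ) = ((Finset.image a Finset.univ).filter (· < a j)).card := by
  classical
  have hmap : (Finset.image a Finset.univ).filter (· < a j) =
      Finset.image (fun l => a (Φ.rep l)) (Finset.univ.filter (· < Φ.idx j)) := by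
    ext x
    simp only [Finset.mem_filter, Finset.mem_image, Finset.mem_univ, true_and]
    constructor
    · rintro ⟨⟨i, rfl⟩, hlt⟩
      refine ⟨Φ.idx i, ?_, apply_rep_idx hd i⟩
      have := lt_iff_lt_of_le_iff_le (hd j i)
      exact_mod_cast this.mp hlt
    · rintro ⟨l, hl, rfl⟩
      refine ⟨⟨Φ.rep l, rfl⟩, ?_⟩
      rw [← apply_rep_idx hd j]
      exact strictMono_rep hd hl
  have hIio : Finset.univ.filter (· < Φ.idx j) = Finset.Iio (Φ.idx j) := by
    ext l; simp
  rw [hmap, Finset.card_image_of_injective _ (strictMono_rep hd).injective, hIio, Fin.card_Iio]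

lemma get_eq_filter (l : Fin Φ.blocks.length) :
    Φ.blocks.get l = Finset.univ.filter (fun i => (Φ.idx i : ℕ) = (l : ℕ)) := by
  classical
  ext i
  simp only [Finset.mem_filter, Finset.mem_univ, true_and]
  constructor
  · intro h
    rw [Φ.idx_eq_of_mem h]
  · intro h
    have : Φ.idx i = l := Fin.ext h
    rw [← this]
    exact Φ.mem_get_idx i

end key

lemma delta_unique {Φ Ψ : OSP n} {a : Fin n → ℕ} (h1 : Φ.delta a) (h2 : Ψ.delta a) : Φ = Ψ := by
  rw [delta_iff] at h1 h2
  have hidx : ∀ j, (Φ.idx j : ℕ) = (Ψ.idx j : ℕ) := fun j => by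
    rw [idx_val h1 j, idx_val h2 j]
  have hlen : Φ.blocks.length = Ψ.blocks.length := by
    rw [← card_image_eq_length h1, ← card_image_eq_length h2]
  apply ext'
  apply List.ext_get hlen
  intro l hl hl'
  have e1 := get_eq_filter h1 ⟨l, hl⟩
  have e2 := get_eq_filter h2 ⟨l, hl'⟩
  rw [e1, e2]
  ext i
  simp only [Finset.mem_filter, Finset.mem_univ, true_and, hidx i]

lemma exists_delta (a : Fin n → ℕ) : ∃ Φ : OSP n, Φ.delta a := by
  classical
  set s : Finset ℕ := Finset.image a Finset.univ with hs
  set e : Fin s.card ↪o ℕ := s.orderEmbOfFin rfl with he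
  have hmem : ∀ m, e m ∈ s := fun m => s.orderEmbOfFin_mem rfl m
  have hmem' : ∀ m, ∃ j, a j = e m := by
    intro m
    obtain ⟨j, -, hj⟩ := Finset.mem_image.mp (hmem m)
    exact ⟨j, hj⟩
  refine ⟨⟨List.ofFn (fun m : Fin s.card => Finset.univ.filter fun j => a j = e m),
    ?_, ?_, ?_⟩, ?_⟩
  · intro B hB
    rw [List.mem_ofFn] at hB
    obtain ⟨m, rfl⟩ := hB
    obtain ⟨j, hj⟩ := hmem' m
    exact ⟨j, by simp [hj]⟩
  · rw [List.pairwise_ofFn]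
    intro m m' hmm'
    have hne : e m ≠ e m' := ne_of_lt (e.strictMono hmm')
    rw [Finset.disjoint_left]
    intro j hj hj'
    simp only [Finset.mem_filter, Finset.mem_univ, true_and] at hj hj'
    exact hne (hj ▸ hj')
  · intro i
    have : a i ∈ s := Finset.mem_image_of_mem a (Finset.mem_univ i)
    have : a i ∈ Set.range e := by rw [Finset.range_orderEmbOfFin]; exact_mod_cast this
    obtain ⟨m, hm⟩ := this
    exact ⟨_, List.mem_ofFn.mpr ⟨m, rfl⟩, by simp [hm]⟩
  · have hlen : (List.ofFn (fun m : Fin s.card =>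
        Finset.univ.filter fun j => a j = e m)).length = s.card := List.length_ofFn
    have hcov : ∀ i : Fin n, ∃ m : Fin s.card, a i = e m := by
      intro i
      have : a i ∈ s := Finset.mem_image_of_mem a (Finset.mem_univ i)
      have : a i ∈ Set.range e := by rw [Finset.range_orderEmbOfFin]; exact_mod_cast this
      obtain ⟨m, hm⟩ := this
      exact ⟨m, hm.symm⟩
    refine ⟨fun i => Fin.cast hlen.symm (hcov i).choose, ?_, ?_⟩
    · intro i
      rw [List.get_ofFn]
      simp only [Finset.mem_filter, Finset.mem_univ, true_and]
      have hc : (Fin.cast List.length_ofFn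
          (Fin.cast hlen.symm (hcov i).choose)) = (hcov i).choose := by
        apply Fin.ext; rfl
      rw [hc]
      exact (hcov i).choose_spec
    · intro i j
      have hi := (hcov i).choose_spec
      have hj := (hcov j).choose_spec
      rw [hi, hj]
      constructor
      · intro h
        have : (hcov i).choose ≤ (hcov j).choose := e.le_iff_le.mp h
        simpa using this
      · intro h
        apply e.monotone
        simpa using h

noncomputable def D (a : Fin n → ℕ) : OSP n := (exists_delta a).choose

lemma D_delta (a : Fin n → ℕ) : (D a).delta a := (exists_delta a).choose_spec

end OSP

lemma SForm.eval_congr {n : ℕ} (S : SForm n) {a b : Fin n → ℕ}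
    (h : ∀ i j, a i ≤ a j ↔ b i ≤ b j) : S.eval a = S.eval b := by
  induction S with
  | atom i j => simp only [SForm.eval]; exact decide_eq_decide.mpr (h i j)
  | not φ ih => simp [SForm.eval, ih]
  | and φ ψ ih1 ih2 => simp [SForm.eval, ih1, ih2]
  | or φ ψ ih1 ih2 => simp [SForm.eval, ih1, ih2]

lemma OSP.solves_of_delta_eval {n : ℕ} {Φ : OSP n} {S : SForm n} {a₀ : Fin n → ℕ}
    (h0 : Φ.delta a₀) (he : S.eval a₀ = true) : Φ.solves S := by
  intro b hb
  rw [OSP.delta_iff] at h0 hb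
  rw [S.eval_congr (fun i j => (hb i j).trans (h0 i j).symm)]
  exact he

lemma SForm.zero_elim (S : SForm 0) : False := by
  induction S with
  | atom i j => exact i.elim0
  | not _ ih => exact ih
  | and _ _ ih _ => exact ih
  | or _ _ ih _ => exact ih

lemma OSP.card_fiber {n : ℕ} [DecidableEq (OSP n)] (Φ : OSP n) (k : ℕ) :
    ((Fintype.piFinset fun _ : Fin n => Finset.Icc 1 k).filter fun a => OSP.D a = Φ).card
      = k.choose Φ.length := by
  classical
  have hchoose : k.choose Φ.length = ((Finset.Icc 1 k).powersetCard Φ.length).card := by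
    rw [Finset.card_powersetCard, Nat.card_Icc]
    simp
  rw [hchoose]
  have hdelta : ∀ a, OSP.D a = Φ →
      ∀ i j, a i ≤ a j ↔ (Φ.idx i : ℕ) ≤ (Φ.idx j : ℕ) := by
    intro a hDa
    rw [← OSP.delta_iff]
    rw [← hDa]; exact OSP.D_delta a
  refine Finset.card_bij' (fun a _ => Finset.image a Finset.univ)
    (fun s hs => fun j =>
      s.orderEmbOfFin (Finset.mem_powersetCard.mp hs).2 (Φ.idx j)) ?hi ?hj ?li ?ri
  case hi =>
    intro a ha
    have ha' := Finset.mem_filter.mp ha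
    rw [Finset.mem_powersetCard]
    constructor
    · intro x hx
      rw [Finset.mem_image] at hx
      obtain ⟨j, -, rfl⟩ := hx
      exact Fintype.mem_piFinset.mp ha'.1 j
    · exact OSP.card_image_eq_length (hdelta a ha'.2)
  case hj =>
    intro s hs
    rw [Finset.mem_filter]
    have hsub := (Finset.mem_powersetCard.mp hs).1
    constructor
    · rw [Fintype.mem_piFinset]
      intro j
      exact hsub (s.orderEmbOfFin_mem _ _)
    · apply OSP.delta_unique (OSP.D_delta _)
      rw [OSP.delta_iff]
      intro i j
      constructor
      · intro h
        exact_mod_cast (s.orderEmbOfFin _).le_iff_le.mp h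
      · intro h
        exact (s.orderEmbOfFin _).monotone (by exact_mod_cast h)
  case li =>
    intro a ha
    have ha' := Finset.mem_filter.mp ha
    funext j
    exact (OSP.eq_orderEmbOfFin (hdelta a ha'.2) j).symm
  case ri =>
    intro s hs
    have hsub := (Finset.mem_powersetCard.mp hs).1
    ext x
    simp only [Finset.mem_image, Finset.mem_univ, true_and]
    constructor
    · rintro ⟨j, rfl⟩
      exact s.orderEmbOfFin_mem _ _
    · intro hx
      have : x ∈ Set.range (s.orderEmbOfFin (Finset.mem_powersetCard.mp hs).2) := by
        rw [Finset.range_orderEmbOfFin]; exact_mod_cast hx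
      obtain ⟨m, hm⟩ := this
      exact ⟨Φ.rep m, (congrArg (s.orderEmbOfFin (Finset.mem_powersetCard.mp hs).2) (Φ.idx_rep m)).trans hm⟩

/-- `χ_S(k) = Σ_{i=1}^n f_i · C(k,i)` where `f_i` counts ordered set partitions
with `i` blocks solving `S`; the coefficients are non-negative integers (they live in `ℕ`). -/
theorem schedCount_eq_sum_binomial {n : ℕ} (S : SForm n) (k : ℕ) :
    schedCount S k =
      ∑ i ∈ Finset.Icc 1 n,
        {Φ : OSP n | Φ.length = i ∧ Φ.solves S}.ncard * k.choose i := by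
  classical
  rcases Nat.eq_zero_or_pos n with rfl | hn
  · exact (S.zero_elim).elim
  have hne : Nonempty (Fin n) := ⟨⟨0, hn⟩⟩
  set box := Fintype.piFinset fun _ : Fin n => Finset.Icc 1 k with hbox
  set T := box.filter (fun a => S.eval a = true) with hT
  set I := T.image OSP.D with hI
  have hdeltaT : ∀ a ∈ T, (OSP.D a).delta a := fun a _ => OSP.D_delta a
  have hsolves : ∀ Φ ∈ I, Φ.solves S := by
    intro Φ hΦ
    rw [hI, Finset.mem_image] at hΦ
    obtain ⟨a, ha, rfl⟩ := hΦ
    exact OSP.solves_of_delta_eval (OSP.D_delta a) (Finset.mem_filter.mp ha).2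
  have hLen : ∀ Φ ∈ I, Φ.length ∈ Finset.Icc 1 n := by
    intro Φ hΦ
    rw [hI, Finset.mem_image] at hΦ
    obtain ⟨a, ha, rfl⟩ := hΦ
    have hd := (OSP.delta_iff _ a).mp (OSP.D_delta a)
    have hcard := OSP.card_image_eq_length hd
    rw [Finset.mem_Icc]
    constructor
    · rw [OSP.length, ← hcard]
      exact Finset.card_pos.mpr ((Finset.univ_nonempty).image a)
    · rw [OSP.length, ← hcard]
      exact le_trans Finset.card_image_le (by simp)
  have h1 : T.card = ∑ Φ ∈ I, (T.filter fun a => OSP.D a = Φ).card :=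
    Finset.card_eq_sum_card_fiberwise (fun a ha => Finset.mem_image_of_mem OSP.D ha)
  have h2 : ∀ Φ ∈ I, (T.filter fun a => OSP.D a = Φ) = box.filter fun a => OSP.D a = Φ := by
    intro Φ hΦ
    rw [hT, Finset.filter_filter]
    apply Finset.filter_congr
    intro a _
    simp only [and_iff_right_iff_imp, decide_eq_true_eq]
    intro h
    exact hsolves Φ hΦ a (h ▸ OSP.D_delta a)
  have h3 : T.card = ∑ Φ ∈ I, k.choose Φ.length := by
    rw [h1]
    refine Finset.sum_congr rfl fun Φ hΦ => ?_
    rw [h2 Φ hΦ]; exact OSP.card_fiber Φ k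
  have h4 : ∑ Φ ∈ I, k.choose Φ.length
      = ∑ i ∈ Finset.Icc 1 n, ∑ Φ ∈ I.filter (fun Φ => Φ.length = i), k.choose Φ.length :=
    (Finset.sum_fiberwise_of_maps_to hLen _).symm
  have h5 : ∀ i ∈ Finset.Icc 1 n,
      ∑ Φ ∈ I.filter (fun Φ => Φ.length = i), k.choose Φ.length
        = {Φ : OSP n | Φ.length = i ∧ Φ.solves S}.ncard * k.choose i := by
    intro i hi
    have hsum : ∑ Φ ∈ I.filter (fun Φ => Φ.length = i), k.choose Φ.length
        = (I.filter (fun Φ => Φ.length = i)).card * k.choose i := by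
      rw [Finset.sum_congr rfl (fun Φ hΦ => by rw [(Finset.mem_filter.mp hΦ).2]),
        Finset.sum_const, smul_eq_mul]
    rw [hsum]
    by_cases hik : i ≤ k
    · congr 1
      have hset : {Φ : OSP n | Φ.length = i ∧ Φ.solves S}
          = ↑(I.filter fun Φ => Φ.length = i) := by
        ext Φ
        simp only [Finset.coe_filter, Set.mem_setOf_eq]
        constructor
        · rintro ⟨hL, hsolv⟩
          refine ⟨?_, hL⟩
          set a : Fin n → ℕ := fun j => (Φ.idx j : ℕ) + 1 with ha
          have hda : Φ.delta a := (Φ.delta_iff a).mpr (fun i' j' => by simp [ha])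
          have hmem : a ∈ box := by
            rw [hbox, Fintype.mem_piFinset]
            intro j
            rw [Finset.mem_Icc]
            have hlt : (Φ.idx j : ℕ) < Φ.blocks.length := (Φ.idx j).isLt
            have hLi : Φ.blocks.length = i := hL
            constructor
            · simp [ha]
            · simp only [ha]
              omega
          have haT : a ∈ T := by
            rw [hT, Finset.mem_filter]
            exact ⟨hmem, hsolv a hda⟩
          rw [hI]
          exact Finset.mem_image.mpr ⟨a, haT, OSP.delta_unique (OSP.D_delta a) hda⟩
        · rintro ⟨hIΦ, hL⟩
          exact ⟨hL, hsolves Φ hIΦ⟩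
      rw [hset, Set.ncard_coe_finset]
    · simp [Nat.choose_eq_zero_of_lt (lt_of_not_ge hik)]
  show T.card = _
  rw [h3, h4]
  exact Finset.sum_congr rfl h5
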